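/- For n ≥ 5, let P_1 = (1 2)(2 3)(3 4)···(n-1, n) in S_n. Then the product σ = (3 n)(2, n-1)(1 n)(1 4)(2 n)(1 3)·(3 5)(3 6)···(3, n-1) consists of n + 1 pairwise distinct transpositions, each distinct from every factor of P_1, and σ · P_1 equals the identity. -/

import Mathlib

open Equiv
private def Tl (n : ℕ) : Perm ℕ := ((List.range (n - 5)).map fun i => Equiv.swap 3 (i + 5)).prod
private def Pl (n : ℕ) : Perm ℕ := ((List.range (n - 1)).map fun i => Equiv.swap (i + 1) (i + 2)).prod
private def Al (n : ℕ) : Perm ℕ :=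
  Equiv.swap 3 n * Equiv.swap 2 (n - 1) * Equiv.swap 1 n * Equiv.swap 1 4 * Equiv.swap 2 n * Equiv.swap 1 3

private lemma base5 : Al 5 * Tl 5 * Pl 5 = 1 := by
  have h5 : (5:ℕ) - 1 = 4 := rfl
  have h0 : (5:ℕ) - 5 = 0 := rfl
  ext x
  simp only [Al, Tl, Pl, h5, h0, List.range_succ, List.range_zero, List.map, List.prod_cons,
    List.prod_nil, List.nil_append, List.cons_append, Perm.mul_apply, Perm.one_apply, mul_one]
  norm_num
  rcases eq_or_ne x 1 with rfl | h1
  · simp (disch := omega) [swap_apply_of_ne_of_ne, Perm.mul_apply]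
  rcases eq_or_ne x 2 with rfl | h2
  · simp (disch := omega) [swap_apply_of_ne_of_ne, Perm.mul_apply]
  rcases eq_or_ne x 3 with rfl | h3
  · simp (disch := omega) [swap_apply_of_ne_of_ne, Perm.mul_apply]
  rcases eq_or_ne x 4 with rfl | h4
  · simp (disch := omega) [swap_apply_of_ne_of_ne, Perm.mul_apply]
  rcases eq_or_ne x 5 with rfl | h5
  · simp (disch := omega) [swap_apply_of_ne_of_ne, Perm.mul_apply]
  · simp (disch := omega) [swap_apply_of_ne_of_ne, Perm.mul_apply]

private lemma keyA (n : ℕ) (hn : 6 ≤ n) :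
    Al (n + 1) * Equiv.swap (n - 1) n = Equiv.swap n (n + 1) * Al n := by
  ext x
  simp only [Al, Nat.add_sub_cancel, Perm.mul_apply]
  rcases eq_or_ne x 1 with rfl | h1
  · simp (disch := omega) [swap_apply_of_ne_of_ne]
  rcases eq_or_ne x 2 with rfl | h2
  · simp (disch := omega) [swap_apply_of_ne_of_ne]
  rcases eq_or_ne x 3 with rfl | h3
  · simp (disch := omega) [swap_apply_of_ne_of_ne]
  rcases eq_or_ne x 4 with rfl | h4
  · simp (disch := omega) [swap_apply_of_ne_of_ne]
  rcases eq_or_ne x (n-1) with rfl | h5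
  · simp (disch := omega) [swap_apply_of_ne_of_ne]
  rcases eq_or_ne x n with rfl | h6
  · simp (disch := omega) [swap_apply_of_ne_of_ne]
  rcases eq_or_ne x (n+1) with rfl | h7
  · simp (disch := omega) [swap_apply_of_ne_of_ne]
  · simp (disch := omega) [swap_apply_of_ne_of_ne]

private lemma Tl_succ' (n : ℕ) (hn : 5 ≤ n) : Tl (n + 1) = Tl n * Equiv.swap 3 n := by
  have h : n + 1 - 5 = (n - 5) + 1 := by omega
  have h2 : n - 5 + 5 = n := by omega
  simp [Tl, h, List.range_succ, h2]

private lemma Pl_succ (n : ℕ) (hn : 1 ≤ n) : Pl (n + 1) = Pl n * Equiv.swap n (n + 1) := by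
  have h : n + 1 - 1 = (n - 1) + 1 := by omega
  have h1 : n - 1 + 1 = n := by omega
  have h2 : n - 1 + 2 = n + 1 := by omega
  unfold Pl
  rw [h, List.range_succ]
  simp [h1, h2]

private lemma base6 : Al 6 * Tl 6 * Pl 6 = 1 := by
  have hT : Tl 6 = Equiv.swap 3 5 := by
    rw [show (6:ℕ) = 5 + 1 from rfl, Tl_succ' 5 (by norm_num)]
    simp [Tl]
  have hP : Pl 6 = Pl 5 * Equiv.swap 5 6 := Pl_succ 5 (by norm_num)
  rw [hT, hP]
  have h5 : (5:ℕ) - 1 = 4 := rfl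
  ext x
  simp only [Al, Pl, h5, List.range_succ, List.range_zero, List.map, List.prod_cons,
    List.prod_nil, List.nil_append, List.cons_append, Perm.mul_apply, Perm.one_apply, mul_one]
  norm_num
  rcases eq_or_ne x 1 with rfl | h1
  · simp (disch := omega) [swap_apply_of_ne_of_ne, Perm.mul_apply]
  rcases eq_or_ne x 2 with rfl | h2
  · simp (disch := omega) [swap_apply_of_ne_of_ne, Perm.mul_apply]
  rcases eq_or_ne x 3 with rfl | h3
  · simp (disch := omega) [swap_apply_of_ne_of_ne, Perm.mul_apply]
  rcases eq_or_ne x 4 with rfl | h4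
  · simp (disch := omega) [swap_apply_of_ne_of_ne, Perm.mul_apply]
  rcases eq_or_ne x 5 with rfl | h5
  · simp (disch := omega) [swap_apply_of_ne_of_ne, Perm.mul_apply]
  rcases eq_or_ne x 6 with rfl | h6
  · simp (disch := omega) [swap_apply_of_ne_of_ne, Perm.mul_apply]
  · simp (disch := omega) [swap_apply_of_ne_of_ne, Perm.mul_apply]

private lemma Tl_fix : ∀ n, 5 ≤ n → ∀ m, n ≤ m → Tl n m = m := by
  intro n hn
  induction n, hn using Nat.le_induction with
  | base => intro m _; simp [Tl]
  | succ n hn ih =>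
    intro m hm
    rw [Tl_succ' n hn]
    have : Equiv.swap 3 n m = m := Equiv.swap_apply_of_ne_of_ne (by omega) (by omega)
    simp [Equiv.Perm.mul_apply, this, ih m (by omega)]

private lemma Tl_three : ∀ n, 6 ≤ n → Tl n 3 = n - 1 := by
  intro n hn
  induction n, hn using Nat.le_induction with
  | base =>
    show Tl (5 + 1) 3 = 5
    rw [Tl_succ' 5 (by norm_num)]
    simp [Tl, Equiv.Perm.mul_apply]
  | succ n hn ih =>
    rw [Tl_succ' n (by omega)]
    have : Equiv.swap 3 n 3 = n := Equiv.swap_apply_left 3 n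
    simp only [Equiv.Perm.mul_apply, this, Tl_fix n (by omega) n le_rfl]
    omega

private lemma Tl_swap (n : ℕ) (hn : 6 ≤ n) :
    Tl n * Equiv.swap 3 n = Equiv.swap (n - 1) n * Tl n := by
  rw [Equiv.mul_swap_eq_swap_mul, Tl_three n hn, Tl_fix n (by omega) n le_rfl]

private lemma key : ∀ n, 5 ≤ n → Al n * Tl n * Pl n = 1 := by
  intro n hn
  induction n, hn using Nat.le_induction with
  | base => exact base5
  | succ n hn ih =>
    rcases eq_or_lt_of_le hn with h5 | h6
    · rw [← h5]; exact base6
    · have h6 : 6 ≤ n := h6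
      rw [Tl_succ' n (by omega), Pl_succ n (by omega), Tl_swap n h6]
      simp only [← mul_assoc]
      rw [keyA n h6, mul_assoc (Equiv.swap n (n+1)) (Al n) (Tl n),
        mul_assoc (Equiv.swap n (n+1)) (Al n * Tl n) (Pl n), ih, mul_one, Equiv.swap_mul_self]

private lemma swap_eq_swap_iff {a b c d : ℕ} (hab : a ≠ b) :
    Equiv.swap a b = Equiv.swap c d ↔ (a = c ∧ b = d) ∨ (a = d ∧ b = c) := by
  constructor
  · intro h
    have h1 : Equiv.swap a b a = Equiv.swap c d a := by rw [h]
    have h2 : Equiv.swap a b b = Equiv.swap c d b := by rw [h]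
    simp [Equiv.swap_apply_def] at h1 h2
    split_ifs at h1 h2 <;> omega
  · rintro (⟨rfl, rfl⟩ | ⟨rfl, rfl⟩)
    · rfl
    · exact Equiv.swap_comm _ _

private lemma swap_ne {a b c d : ℕ} (hab : a ≠ b)
    (h : ¬((a = c ∧ b = d) ∨ (a = d ∧ b = c))) : Equiv.swap a b ≠ Equiv.swap c d :=
  fun he => h ((swap_eq_swap_iff hab).1 he)

theorem stmt9 (n : ℕ) (hn : 5 ≤ n) :
    ∀ σL : List (Equiv.Perm ℕ),
      σL = [Equiv.swap 3 n, Equiv.swap 2 (n - 1), Equiv.swap 1 n,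
          Equiv.swap 1 4, Equiv.swap 2 n, Equiv.swap 1 3] ++
        ((List.range (n - 5)).map fun i => Equiv.swap 3 (i + 5)) →
      σL.length = n + 1 ∧
      σL.Nodup ∧
      (∀ τ ∈ σL, ∃ a b, a ∈ Finset.Icc 1 n ∧ b ∈ Finset.Icc 1 n ∧ a ≠ b ∧
        τ = Equiv.swap a b) ∧
      (∀ τ ∈ σL, ∀ i, 1 ≤ i → i < n → τ ≠ Equiv.swap i (i + 1)) ∧
      σL.prod * ((List.range (n - 1)).map fun i =>
        Equiv.swap (i + 1) (i + 2)).prod = 1 := by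
  rintro σL rfl
  refine ⟨?_, ?_, ?_, ?_, ?_⟩
  · simp; omega
  · rw [List.nodup_append]
    refine ⟨?_, ?_, ?_⟩
    · simp only [List.nodup_cons, List.mem_cons, List.mem_singleton, List.not_mem_nil,
        not_false_iff, List.nodup_nil, and_true, not_or]
      refine ⟨⟨?_, ?_, ?_, ?_, ?_⟩, ⟨?_, ?_, ?_, ?_⟩, ⟨?_, ?_, ?_⟩, ⟨?_, ?_⟩, ?_⟩ <;>
        exact swap_ne (by omega) (by omega)
    · refine List.Nodup.map ?_ List.nodup_range
      intro i j hij
      have := (swap_eq_swap_iff (a := 3) (b := i + 5) (by omega)).1 hij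
      omega
    · intro τ hτ τ' hτ' heq; subst heq
      simp only [List.mem_map, List.mem_range] at hτ'
      obtain ⟨i, hi, rfl⟩ := hτ'
      simp only [List.mem_cons, List.mem_singleton, List.not_mem_nil, or_false] at hτ
      rcases hτ with h | h | h | h | h | h <;>
      · have := (swap_eq_swap_iff (a := 3) (b := i + 5) (by omega)).1 h
        omega
  · intro τ hτ
    simp only [List.mem_append, List.mem_cons, List.mem_singleton, List.not_mem_nil, or_false,
      List.mem_map, List.mem_range] at hτ
    rcases hτ with (rfl | rfl | rfl | rfl | rfl | rfl) | ⟨i, hi, rfl⟩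
    · exact ⟨3, n, by simp [Finset.mem_Icc]; omega, by simp [Finset.mem_Icc]; omega, by omega, rfl⟩
    · exact ⟨2, n - 1, by simp [Finset.mem_Icc]; omega, by simp [Finset.mem_Icc]; omega, by omega, rfl⟩
    · exact ⟨1, n, by simp [Finset.mem_Icc]; omega, by simp [Finset.mem_Icc]; omega, by omega, rfl⟩
    · exact ⟨1, 4, by simp [Finset.mem_Icc]; omega, by simp [Finset.mem_Icc]; omega, by omega, rfl⟩
    · exact ⟨2, n, by simp [Finset.mem_Icc]; omega, by simp [Finset.mem_Icc]; omega, by omega, rfl⟩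
    · exact ⟨1, 3, by simp [Finset.mem_Icc]; omega, by simp [Finset.mem_Icc]; omega, by omega, rfl⟩
    · exact ⟨3, i + 5, by simp [Finset.mem_Icc]; omega, by simp [Finset.mem_Icc]; omega, by omega, rfl⟩
  · intro τ hτ i h1 h2
    simp only [List.mem_append, List.mem_cons, List.mem_singleton, List.not_mem_nil, or_false,
      List.mem_map, List.mem_range] at hτ
    rcases hτ with (rfl | rfl | rfl | rfl | rfl | rfl) | ⟨j, hj, rfl⟩ <;>
      exact swap_ne (by omega) (by omega)
  · simpa [Al, Tl, Pl, mul_assoc] using key n hn
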